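/- arXiv:1501.03737 — 2 statements merged into one kernel-verified Lean document; each statement's English description precedes it below -/
import Mathlib

section
/- For projectors Π_1, ..., Π_N and a density operator ρ on a finite-dimensional Hilbert space, 1 - Tr(Π_N ⋯ Π_1 ρ Π_1 ⋯ Π_N) ≤ 2 √(∑_{i=1}^N Tr((I - Π_i) ρ)). -/
open scoped ComplexOrder
open Matrix
open scoped MatrixOrder

/-- `Π_N ⋯ Π_1 ρ Π_1 ⋯ Π_N` for the family `P = (Π_1, …, Π_N)`. -/
noncomputable def sandwich {d N : ℕ} (P : Fin N → Matrix (Fin d) (Fin d) ℂ)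
    (ρ : Matrix (Fin d) (Fin d) ℂ) : Matrix (Fin d) (Fin d) ℂ :=
  ((List.finRange N).map P).reverse.prod * ρ * ((List.finRange N).map P).prod

namespace SenAux

variable {d : ℕ}

/-- Embed a matrix into Euclidean space (Frobenius/Hilbert–Schmidt structure). -/
noncomputable def e (A : Matrix (Fin d) (Fin d) ℂ) : EuclideanSpace ℂ (Fin d × Fin d) :=
  (WithLp.linearEquiv 2 ℂ ((Fin d × Fin d) → ℂ)).symm (fun p => A p.1 p.2)

lemma e_add (A B : Matrix (Fin d) (Fin d) ℂ) : e (A + B) = e A + e B := by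
  rw [e, e, e, ← map_add]
  rfl

lemma e_zero : e (0 : Matrix (Fin d) (Fin d) ℂ) = 0 := by
  rw [e, ← (WithLp.linearEquiv 2 ℂ ((Fin d × Fin d) → ℂ)).symm.map_zero]
  rfl

lemma e_sub (A B : Matrix (Fin d) (Fin d) ℂ) : e (A - B) = e A - e B := by
  rw [e, e, e, ← map_sub]
  rfl

lemma inner_e (A B : Matrix (Fin d) (Fin d) ℂ) :
    (inner ℂ (e A) (e B) : ℂ) = (Aᴴ * B).trace := by
  rw [PiLp.inner_apply, Matrix.trace]
  simp only [RCLike.inner_apply, Matrix.diag_apply, Matrix.mul_apply,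
    Matrix.conjTranspose_apply]
  rw [Finset.sum_comm, ← Finset.sum_product']
  exact Finset.sum_congr rfl fun x _ => mul_comm _ _

lemma norm_e_sq (A : Matrix (Fin d) (Fin d) ℂ) :
    ‖e A‖ ^ 2 = (Aᴴ * A).trace.re := by
  have h := inner_self_eq_norm_sq (𝕜 := ℂ) (e A)
  rw [inner_e] at h
  rw [← h]
  rfl

lemma pyth {Q : Matrix (Fin d) (Fin d) ℂ} (h1 : Q * Q = Q) (h2 : Q.IsHermitian)
    (A B : Matrix (Fin d) (Fin d) ℂ) :
    ‖e ((1 - Q) * A) + e (Q * B)‖ ^ 2 = ‖e ((1 - Q) * A)‖ ^ 2 + ‖e (Q * B)‖ ^ 2 := by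
  have hip : (inner ℂ (e ((1 - Q) * A)) (e (Q * B)) : ℂ) = 0 := by
    rw [inner_e]
    have hz : ((1 - Q) * A)ᴴ * (Q * B) = 0 := by
      rw [Matrix.conjTranspose_mul, Matrix.conjTranspose_sub, Matrix.conjTranspose_one, h2.eq]
      calc Aᴴ * (1 - Q) * (Q * B) = Aᴴ * ((1 - Q) * Q) * B := by
            rw [Matrix.mul_assoc, Matrix.mul_assoc, Matrix.mul_assoc]
        _ = 0 := by rw [Matrix.sub_mul, Matrix.one_mul, h1, sub_self, Matrix.mul_zero,
            Matrix.zero_mul]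
    rw [hz, Matrix.trace_zero]
  rw [norm_add_sq (𝕜 := ℂ), hip]
  simp

lemma norm_proj_le {Q : Matrix (Fin d) (Fin d) ℂ} (h1 : Q * Q = Q) (h2 : Q.IsHermitian)
    (A : Matrix (Fin d) (Fin d) ℂ) : ‖e (Q * A)‖ ≤ ‖e A‖ := by
  have hsplit : e A = e ((1 - Q) * A) + e (Q * A) := by
    rw [← e_add]
    congr 1
    rw [Matrix.sub_mul, Matrix.one_mul, sub_add_cancel]
  have h := pyth h1 h2 A A
  rw [← hsplit] at h
  refine le_of_pow_le_pow_left₀ two_ne_zero (norm_nonneg _) ?_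
  rw [h]
  nlinarith [sq_nonneg ‖e ((1 - Q) * A)‖]

lemma norm_listprod_le (L : List (Matrix (Fin d) (Fin d) ℂ))
    (hL : ∀ Q ∈ L, Q * Q = Q ∧ Q.IsHermitian) (A : Matrix (Fin d) (Fin d) ℂ) :
    ‖e (L.prod * A)‖ ≤ ‖e A‖ := by
  induction L with
  | nil => simp
  | cons Q L ih =>
      rw [List.prod_cons, Matrix.mul_assoc]
      have hQ := hL Q (List.mem_cons_self)
      exact (norm_proj_le hQ.1 hQ.2 _).trans
        (ih fun R hR => hL R (List.mem_cons_of_mem _ hR))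

lemma key (A : Matrix (Fin d) (Fin d) ℂ) (L : List (Matrix (Fin d) (Fin d) ℂ))
    (hL : ∀ Q ∈ L, Q * Q = Q ∧ Q.IsHermitian) :
    ‖e (A - L.prod * A)‖ ^ 2 ≤ (L.map (fun Q => ‖e ((1 - Q) * A)‖ ^ 2)).sum := by
  induction L with
  | nil => simp [e_zero]
  | cons Q L ih =>
      have hQ := hL Q (List.mem_cons_self)
      have hL' : ∀ R ∈ L, R * R = R ∧ R.IsHermitian :=
        fun R hR => hL R (List.mem_cons_of_mem _ hR)
      have hdec : A - (Q :: L).prod * A = (1 - Q) * A + Q * (A - L.prod * A) := by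
        rw [List.prod_cons, Matrix.sub_mul, Matrix.one_mul, Matrix.mul_sub, Matrix.mul_assoc]
        abel
      rw [hdec, e_add, pyth hQ.1 hQ.2, List.map_cons, List.sum_cons]
      have hc : ‖e (Q * (A - L.prod * A))‖ ^ 2 ≤ ‖e (A - L.prod * A)‖ ^ 2 :=
        pow_le_pow_left₀ (norm_nonneg _) (norm_proj_le hQ.1 hQ.2 _) 2
      have ht := ih hL'
      linarith

end SenAux

open SenAux

/-- Sen's non-commutative union bound: for orthogonal projectors
`Π_1, …, Π_N` and a density operator `ρ` on a finite-dimensional Hilbert space,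
`1 − Tr(Π_N ⋯ Π_1 ρ Π_1 ⋯ Π_N) ≤ 2 √(∑_{i=1}^N Tr((I − Π_i) ρ))`. -/
theorem sen_noncommutative_union_bound {d N : ℕ}
    (ρ : Matrix (Fin d) (Fin d) ℂ) (hρ : ρ.PosSemidef) (hρtr : ρ.trace = 1)
    (P : Fin N → Matrix (Fin d) (Fin d) ℂ)
    (hproj : ∀ i, P i * P i = P i)
    (hherm : ∀ i, (P i).IsHermitian) :
    1 - (sandwich P ρ).trace.re ≤
      2 * Real.sqrt (∑ i, (((1 - P i) * ρ).trace).re) := by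
  classical
  set S := CFC.sqrt ρ with hSdef
  have hS : S.PosSemidef := (CFC.sqrt_nonneg ρ).posSemidef
  have hSH : Sᴴ = S := hS.1
  have hSS : S * S = ρ := CFC.sqrt_mul_sqrt_self ρ hρ.nonneg
  set L : List (Matrix (Fin d) (Fin d) ℂ) := ((List.finRange N).map P).reverse with hLdef
  have hL : ∀ Q ∈ L, Q * Q = Q ∧ Q.IsHermitian := by
    intro Q hQ
    rw [hLdef, List.mem_reverse, List.mem_map] at hQ
    obtain ⟨i, _, rfl⟩ := hQ
    exact ⟨hproj i, hherm i⟩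
  set Q := L.prod with hQdef
  have hQH : Qᴴ = ((List.finRange N).map P).prod := by
    rw [hQdef, Matrix.conjTranspose_list_prod, hLdef, List.map_reverse, List.reverse_reverse,
      List.map_map]
    congr 1
    exact List.map_congr_left fun i _ => (hherm i).eq
  have hsand : sandwich P ρ = (Q * S) * (S * Qᴴ) := by
    rw [sandwich, ← hLdef, ← hQdef, ← hQH, ← hSS]
    simp only [Matrix.mul_assoc]
  have htr : (sandwich P ρ).trace.re = ‖e (Q * S)‖ ^ 2 := by
    rw [norm_e_sq, Matrix.conjTranspose_mul, hSH, hsand, Matrix.trace_mul_comm]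
  have hS1 : ‖e S‖ = 1 := by
    have h2 : ‖e S‖ ^ 2 = 1 := by
      rw [norm_e_sq, hSH, hSS, hρtr]
      simp
    calc ‖e S‖ = Real.sqrt (‖e S‖ ^ 2) := (Real.sqrt_sq (norm_nonneg _)).symm
      _ = 1 := by rw [h2, Real.sqrt_one]
  have heps : ∀ i : Fin N, (((1 - P i) * ρ).trace).re = ‖e ((1 - P i) * S)‖ ^ 2 := by
    intro i
    have h1 : (1 - P i)ᴴ = 1 - P i := by
      rw [Matrix.conjTranspose_sub, Matrix.conjTranspose_one, (hherm i).eq]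
    have h2 : (1 - P i) * (1 - P i) = 1 - P i := by
      simp only [Matrix.mul_sub, Matrix.sub_mul, Matrix.mul_one, Matrix.one_mul, hproj i]
      abel
    have h3 : ((1 - P i) * S)ᴴ * ((1 - P i) * S) = S * ((1 - P i) * S) := by
      rw [Matrix.conjTranspose_mul, h1, hSH, Matrix.mul_assoc,
        ← Matrix.mul_assoc (1 - P i) (1 - P i) S, h2]
    rw [norm_e_sq, h3, Matrix.trace_mul_comm S ((1 - P i) * S), Matrix.mul_assoc, hSS]
  have hsum : ∑ i, (((1 - P i) * ρ).trace).re
      = (L.map (fun R => ‖e ((1 - R) * S)‖ ^ 2)).sum := by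
    simp_rw [heps]
    rw [Fin.sum_univ_def, hLdef, List.map_reverse, List.sum_reverse, List.map_map]
    rfl
  have hkey : ‖e (S - Q * S)‖ ^ 2 ≤ ∑ i, (((1 - P i) * ρ).trace).re := by
    rw [hsum]
    exact key S L hL
  have h5 : ‖e (S - Q * S)‖ ≤ Real.sqrt (∑ i, (((1 - P i) * ρ).trace).re) := by
    calc ‖e (S - Q * S)‖ = Real.sqrt (‖e (S - Q * S)‖ ^ 2) :=
          (Real.sqrt_sq (norm_nonneg _)).symm
      _ ≤ _ := Real.sqrt_le_sqrt hkey
  have ht1 : ‖e (Q * S)‖ ≤ 1 := by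
    have h := norm_listprod_le L hL S
    rwa [hS1] at h
  have h6 : 1 - ‖e (Q * S)‖ ≤ ‖e (S - Q * S)‖ := by
    rw [e_sub]
    calc 1 - ‖e (Q * S)‖ = ‖e S‖ - ‖e (Q * S)‖ := by rw [hS1]
      _ ≤ ‖e S - e (Q * S)‖ := norm_sub_norm_le _ _
  rw [htr]
  nlinarith [norm_nonneg (e (Q * S)), norm_nonneg (e (S - Q * S)), h5, h6, ht1]
end

section
/- For projectors Π_1, ..., Π_N and a density operator ρ on a finite-dimensional Hilbert space, 1 - Tr(Π_N ⋯ Π_1 ρ Π_1 ⋯ Π_N) ≤ 4 ∑_{i=1}^N Tr((I - Π_i) ρ). -/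
open scoped ComplexOrder

open Matrix

open Matrix in
lemma gao_trace_nonneg_of_psd {n : ℕ} {A : Matrix (Fin n) (Fin n) ℂ} (hA : A.PosSemidef) :
    0 ≤ A.trace := by
  rw [Matrix.trace]
  apply Finset.sum_nonneg
  intro i _
  exact hA.diag_nonneg

lemma gao_trace_mul_nonneg_of_psd {n : ℕ} {A B : Matrix (Fin n) (Fin n) ℂ}
    (hA : A.PosSemidef) (hB : B.PosSemidef) : 0 ≤ (A*B).trace := by
  obtain ⟨C, rfl⟩ : ∃ C : Matrix (Fin n) (Fin n) ℂ, A = Cᴴ * C := by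
    open scoped MatrixOrder in
    exact CStarAlgebra.nonneg_iff_eq_star_mul_self.mp hA.nonneg
  have h1 : (C*B*Cᴴ).trace = (Cᴴ*C*B).trace := Matrix.trace_mul_cycle C B Cᴴ
  rw [← h1]
  exact gao_trace_nonneg_of_psd (hB.mul_mul_conjTranspose_same C)

lemma gao_step_ring {R : Type*} [Ring R] (M B C S : R) (hM : M*M = M) :
    4*((1-M)+S) + 2*(M*B + C*M) - (C*M)*(M*B) - (1+1+1) =
      (4*S + 2*(B+C) - C*B - (1+1+1)) + ((1+1)-C)*(1-M) * ((1-M)*((1+1)-B)) := by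
  have hQQ : (1-M)*(1-M) = 1-M := by
    have : (1-M)*(1-M) = 1 - M - M + M*M := by noncomm_ring
    rw [this, hM]; noncomm_ring
  have h2 : ((1+1)-C)*(1-M) * ((1-M)*((1+1)-B)) = ((1+1)-C)*(((1-M)*(1-M))*((1+1)-B)) := by
    noncomm_ring
  have h3 : (C*M)*(M*B) = C*(M*M)*B := by noncomm_ring
  rw [h2, hQQ, h3, hM]
  noncomm_ring

lemma gao_final_ring {R : Type*} [Ring R] (B C S : R) :
    4*S + C*B - 1 = (4*S + 2*(B+C) - C*B - (1+1+1)) + (1-C)*(1-B) + (1-C)*(1-B) := by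
  noncomm_ring

lemma gao_key {d : ℕ} (L : List (Matrix (Fin d) (Fin d) ℂ))
    (h : ∀ M ∈ L, M*M = M ∧ Mᴴ = M) :
    Matrix.PosSemidef (4*((L.map (fun M => 1-M)).sum) + 2*(L.prod + L.prodᴴ)
      - L.prodᴴ*L.prod - (1+1+1)) := by
  induction L with
  | nil =>
      have : (4*(([] : List (Matrix (Fin d) (Fin d) ℂ)).map (fun M => 1-M)).sum
          + 2*(([] : List (Matrix (Fin d) (Fin d) ℂ)).prod + ([] : List (Matrix (Fin d) (Fin d) ℂ)).prodᴴ)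
          - ([] : List (Matrix (Fin d) (Fin d) ℂ)).prodᴴ*([] : List (Matrix (Fin d) (Fin d) ℂ)).prod - (1+1+1))
          = 0 := by
        simp only [List.map_nil, List.sum_nil, List.prod_nil, Matrix.conjTranspose_one]
        noncomm_ring
      rw [this]
      exact Matrix.PosSemidef.zero
  | cons M l ih =>
      have hM := (h M List.mem_cons_self).1
      have hMH := (h M List.mem_cons_self).2
      have ih' := ih (fun A hA => h A (List.mem_cons_of_mem M hA))
      set B := l.prod with hB
      have hcons : ((M :: l).map (fun M => 1-M)).sum = (1-M) + (l.map (fun M => 1-M)).sum := by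
        simp
      have hprod : (M :: l).prod = M * B := by simp [hB]
      have hprodH : ((M :: l).prod)ᴴ = Bᴴ * M := by
        rw [hprod, Matrix.conjTranspose_mul, hMH]
      rw [hcons, hprodH, hprod]
      have key : 4*((1-M) + (l.map (fun M => 1-M)).sum) + 2*(M*B + Bᴴ*M) - (Bᴴ*M)*(M*B) - (1+1+1)
          = (4*((l.map (fun M => 1-M)).sum) + 2*(B+Bᴴ) - Bᴴ*B - (1+1+1))
            + ((1+1)-Bᴴ)*(1-M) * ((1-M)*((1+1)-B)) :=
        gao_step_ring M B Bᴴ _ hM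
      rw [key]
      apply ih'.add
      have hD : ((1+1)-Bᴴ)*(1-M) = ((1-M)*((1+1)-B))ᴴ := by
        simp [Matrix.conjTranspose_mul, Matrix.conjTranspose_sub, hMH]
      rw [hD]
      exact Matrix.posSemidef_conjTranspose_mul_self _

lemma gao_final {d : ℕ} (L : List (Matrix (Fin d) (Fin d) ℂ))
    (h : ∀ M ∈ L, M*M = M ∧ Mᴴ = M) :
    Matrix.PosSemidef (4*((L.map (fun M => 1-M)).sum) + L.prodᴴ*L.prod - 1) := by
  rw [gao_final_ring L.prod L.prodᴴ ((L.map (fun M => 1-M)).sum)]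
  apply ((gao_key L h).add _).add _
  · have : (1 - L.prodᴴ) = (1 - L.prod)ᴴ := by simp
    rw [this]; exact Matrix.posSemidef_conjTranspose_mul_self _
  · have : (1 - L.prodᴴ) = (1 - L.prod)ᴴ := by simp
    rw [this]; exact Matrix.posSemidef_conjTranspose_mul_self _

/-- Gao's union bound: for orthogonal projectors
`Π_1, …, Π_N` and a density operator `ρ` on a finite-dimensional Hilbert space,
`1 − Tr(Π_N ⋯ Π_1 ρ Π_1 ⋯ Π_N) ≤ 4 ∑_{i=1}^N Tr((I − Π_i) ρ)`. -/
theorem gao_noncommutative_union_bound {d N : ℕ}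
    (ρ : Matrix (Fin d) (Fin d) ℂ) (hρ : ρ.PosSemidef) (hρtr : ρ.trace = 1)
    (P : Fin N → Matrix (Fin d) (Fin d) ℂ)
    (hproj : ∀ i, P i * P i = P i)
    (hherm : ∀ i, (P i).IsHermitian) :
    1 - (sandwich P ρ).trace.re ≤
      4 * ∑ i, (((1 - P i) * ρ).trace).re := by
  set L : List (Matrix (Fin d) (Fin d) ℂ) := ((List.finRange N).map P).reverse with hLdef
  have hL : ∀ M ∈ L, M * M = M ∧ Mᴴ = M := by
    intro M hM
    rw [hLdef, List.mem_reverse, List.mem_map] at hM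
    obtain ⟨i, _, rfl⟩ := hM
    exact ⟨hproj i, hherm i⟩
  -- the list sum is the finite sum
  have hS : (L.map (fun M => 1-M)).sum = ∑ i, (1 - P i) := by
    rw [hLdef, List.map_reverse, List.sum_reverse, List.map_map, Fin.sum_univ_def]
    rfl
  -- conjTranspose of the reversed product is the forward product
  have hBH : (L.prod)ᴴ = ((List.finRange N).map P).prod := by
    rw [hLdef, Matrix.conjTranspose_list_prod, List.map_reverse, List.reverse_reverse,
      List.map_map]
    congr 1
    apply List.map_congr_left
    intro i _
    exact hherm i
  -- Gao's operator inequality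
  have hG : Matrix.PosSemidef (4*(∑ i, (1 - P i)) + L.prodᴴ*L.prod - 1) := by
    rw [← hS]; exact gao_final L hL
  have h0 : 0 ≤ (ρ * (4*(∑ i, (1 - P i)) + L.prodᴴ*L.prod - 1)).trace :=
    gao_trace_mul_nonneg_of_psd hρ hG
  -- expand the trace
  have htr : (ρ * (4*(∑ i, (1 - P i)) + L.prodᴴ*L.prod - 1)).trace
      = 4*(ρ * ∑ i, (1 - P i)).trace + (ρ*(L.prodᴴ*L.prod)).trace - ρ.trace := by
    have h : ρ * (4*(∑ i, (1 - P i)) + L.prodᴴ*L.prod - 1)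
        = (ρ*(∑ i, (1 - P i)) + ρ*(∑ i, (1 - P i)) + ρ*(∑ i, (1 - P i)) + ρ*(∑ i, (1 - P i)))
          + ρ*(L.prodᴴ*L.prod) - ρ := by noncomm_ring
    simp only [h, Matrix.trace_sub, Matrix.trace_add]
    ring
  have hsum : (ρ * ∑ i, (1 - P i)).trace = ∑ i, ((1 - P i) * ρ).trace := by
    rw [Finset.mul_sum, Matrix.trace_sum]
    exact Finset.sum_congr rfl fun i _ => Matrix.trace_mul_comm ρ (1 - P i)
  have hsand : (sandwich P ρ).trace = (ρ*(L.prodᴴ*L.prod)).trace := by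
    rw [sandwich, ← hBH, ← hLdef]
    rw [Matrix.trace_mul_cycle L.prod ρ (L.prod)ᴴ, Matrix.trace_mul_comm]
  rw [htr, hsum, hρtr, ← hsand] at h0
  rw [Complex.le_def] at h0
  have h1 := h0.1
  simp only [Complex.zero_re, Complex.add_re, Complex.sub_re, Complex.one_re,
    Complex.mul_re, Complex.re_ofNat, Complex.im_ofNat, Complex.re_sum, zero_mul,
    sub_zero] at h1
  linarith
end
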